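/- With the semilinear volatility $v(s,x) = \sigma \frac{T}{T-s} x$ and information process $I_t = B_t + \int_0^t v(s,X)\,\mathrm{d}s$, the exponent in the filtering density satisfies the closed-form identity $\int_0^t v(s,x)\,\mathrm{d}I_s - \tfrac{1}{2}\int_0^t v(s,x)^2\,\mathrm{d}s = \frac{T}{T-t}\left(\sigma x\, \xi_{tT} - \tfrac{1}{2}\sigma^2 x^2 t\right)$, where $\xi_{tT} = \sigma X t + \beta_{tT}$ and $\beta_{tT} = (T-t)\int_0^t \frac{\mathrm{d}B_s}{T-s}$. -/

import Mathlib

lemma key_int (T t : ℝ) (h0 : 0 ≤ t) (htT : t < T) :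
    ∫ s in (0:ℝ)..t, ((T - s)^2)⁻¹ = (T - t)⁻¹ - T⁻¹ := by
  have hne : ∀ s ∈ Set.uIcc (0:ℝ) t, T - s ≠ 0 := by
    intro s hs
    rw [Set.uIcc_of_le h0] at hs
    have := hs.2
    nlinarith [hs.1, hs.2]
  have hderiv : ∀ s ∈ Set.uIcc (0:ℝ) t,
      HasDerivAt (fun u => (T - u)⁻¹) (((T - s)^2)⁻¹) s := by
    intro s hs
    have h1 : HasDerivAt (fun u : ℝ => T - u) (-1) s := by
      simpa using (hasDerivAt_id s).const_sub T
    have := h1.inv (hne s hs)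
    convert this using 1
    all_goals first | rfl | field_simp
  have hcont : ContinuousOn (fun s => ((T - s)^2)⁻¹) (Set.uIcc (0:ℝ) t) := by
    apply ContinuousOn.inv₀
    · fun_prop
    · intro s hs; exact pow_ne_zero 2 (hne s hs)
  have := intervalIntegral.integral_eq_sub_of_hasDerivAt hderiv
    (hcont.intervalIntegrable)
  simpa using this

/-- closed form of the exponent in the filtering density for the
semilinear volatility `v(s,x) = σ T x/(T-s)`.  Here `M t = ∫₀ᵗ (T-s)⁻¹ dB_s`, so
that `∫₀ᵗ v(s,x) dI_s = σ T x * M t + ∫₀ᵗ v(s,x) v(s,X) ds`,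
`β_{tT} = (T-t) M t` is the Brownian bridge and `ξ_{tT} = σ X t + β_{tT}`. -/
theorem stmt_8 (T σ : ℝ) (hT : 0 < T) (hσ : 0 < σ)
    {Ω : Type*} (X : Ω → ℝ) (M : ℝ → Ω → ℝ)
    (v : ℝ → ℝ → ℝ) (hv : ∀ s x, v s x = σ * T / (T - s) * x)
    (β : ℝ → Ω → ℝ) (hβ : ∀ t ω, β t ω = (T - t) * M t ω)
    (ξ : ℝ → Ω → ℝ) (hξ : ∀ t ω, ξ t ω = σ * X ω * t + β t ω) :
    ∀ t ∈ Set.Ico (0:ℝ) T, ∀ x : ℝ, ∀ ω : Ω,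
      (σ * T * x * M t ω + ∫ s in (0:ℝ)..t, v s x * v s (X ω))
          - (1/2) * ∫ s in (0:ℝ)..t, (v s x)^2
        = T / (T - t) * (σ * x * ξ t ω - (1/2) * σ^2 * x^2 * t) := by
  rintro t ⟨h0, htT⟩ x ω
  have h1 : (∫ s in (0:ℝ)..t, v s x * v s (X ω))
      = σ^2 * T^2 * x * X ω * ((T - t)⁻¹ - T⁻¹) := by
    rw [← key_int T t h0 htT, ← intervalIntegral.integral_const_mul]
    apply intervalIntegral.integral_congr
    intro s hs
    rw [Set.uIcc_of_le h0] at hs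
    have hne : T - s ≠ 0 := by have := hs.2; intro h; linarith
    simp only [hv]
    field_simp
  have h2 : (∫ s in (0:ℝ)..t, (v s x)^2)
      = σ^2 * T^2 * x^2 * ((T - t)⁻¹ - T⁻¹) := by
    rw [← key_int T t h0 htT, ← intervalIntegral.integral_const_mul]
    apply intervalIntegral.integral_congr
    intro s hs
    rw [Set.uIcc_of_le h0] at hs
    have hne : T - s ≠ 0 := by have := hs.2; intro h; linarith
    simp only [hv]
    field_simp
  rw [h1, h2, hξ, hβ]
  have hTt : T - t ≠ 0 := by linarith
  field_simp
  ring
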